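/- Let X ~ Bernoulli(1/2), Y = ∅ (no side information), and let D_1, D_2 ≥ 0. Define R(α) = max{ α(1 - H_2(D_1/α))·1[D_1/α ≤ 1/2], (1-α)(1 - H_2(D_2/(1-α)))·1[D_2/(1-α) ≤ 1/2] } for α ∈ (0,1). Then for any random variables A ∈ {1,2}, U_1, U_2 and reconstruction X̂_1 with P(A=2) = α, satisfying α·E[d_H(X,X̂_1)|A=2] ≤ D_1 where X̂_1 is a function of U_1 and d_H is Hamming distortion, one has I(X;A) + α·I(X;U_1|A=2) ≥ α(1 - H_2(D_1/α)) whenever D_1/α ≤ 1/2. -/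

import Mathlib

open Finset

section Defs

/-- Probability of the event `X = x` under the mass function `μ`. -/
noncomputable def pr {Ω : Type*} [Fintype Ω] (μ : Ω → ℝ) {α : Type*} [Fintype α]
    [DecidableEq α] (X : Ω → α) (x : α) : ℝ :=
  ∑ ω, if X ω = x then μ ω else 0

/-- Shannon entropy (base 2) of a finitely valued random variable. -/
noncomputable def ent {Ω : Type*} [Fintype Ω] (μ : Ω → ℝ) {α : Type*} [Fintype α]
    [DecidableEq α] (X : Ω → α) : ℝ :=
  - ∑ x, pr μ X x * Real.logb 2 (pr μ X x)

/-- Conditional entropy `H(X|Y) = H(X,Y) - H(Y)`. -/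
noncomputable def condEnt {Ω : Type*} [Fintype Ω] (μ : Ω → ℝ) {α β : Type*}
    [Fintype α] [DecidableEq α] [Fintype β] [DecidableEq β]
    (X : Ω → α) (Y : Ω → β) : ℝ :=
  ent μ (fun ω => (X ω, Y ω)) - ent μ Y

/-- Mutual information `I(X;Y) = H(X) - H(X|Y)`. -/
noncomputable def mi {Ω : Type*} [Fintype Ω] (μ : Ω → ℝ) {α β : Type*}
    [Fintype α] [DecidableEq α] [Fintype β] [DecidableEq β]
    (X : Ω → α) (Y : Ω → β) : ℝ :=
  ent μ X - condEnt μ X Y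

/-- Conditional mutual information `I(X;Y|Z) = H(X|Z) - H(X|Y,Z)`. -/
noncomputable def cmi {Ω : Type*} [Fintype Ω] (μ : Ω → ℝ) {α β γ : Type*}
    [Fintype α] [DecidableEq α] [Fintype β] [DecidableEq β] [Fintype γ] [DecidableEq γ]
    (X : Ω → α) (Y : Ω → β) (Z : Ω → γ) : ℝ :=
  condEnt μ X Z - condEnt μ X (fun ω => (Y ω, Z ω))

/-- `μ` is a probability mass function on the finite sample space `Ω`. -/
def IsProb {Ω : Type*} [Fintype Ω] (μ : Ω → ℝ) : Prop :=
  (∀ ω, 0 ≤ μ ω) ∧ ∑ ω, μ ω = 1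

/-- `A` and `Y` are conditionally independent given `X` (Markov chain `A - X - Y`). -/
def CondIndep {Ω : Type*} [Fintype Ω] (μ : Ω → ℝ) {α β γ : Type*}
    [Fintype α] [DecidableEq α] [Fintype β] [DecidableEq β] [Fintype γ] [DecidableEq γ]
    (A : Ω → α) (Y : Ω → β) (X : Ω → γ) : Prop :=
  ∀ a y x, pr μ (fun ω => (A ω, Y ω, X ω)) (a, y, x) * pr μ X x =
    pr μ (fun ω => (A ω, X ω)) (a, x) * pr μ (fun ω => (Y ω, X ω)) (y, x)

/-- Binary entropy function (base 2). -/
noncomputable def H2 (p : ℝ) : ℝ :=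
  -(p * Real.logb 2 p) - (1 - p) * Real.logb 2 (1 - p)

end Defs

section Aux

lemma pr_nonneg {Ω : Type*} [Fintype Ω] {μ : Ω → ℝ} (hμ : ∀ ω, 0 ≤ μ ω)
    {α : Type*} [Fintype α] [DecidableEq α] (X : Ω → α) (x : α) :
    0 ≤ pr μ X x :=
  Finset.sum_nonneg fun ω _ => by split <;> simp [hμ ω]

lemma pr_sum {Ω : Type*} [Fintype Ω] (μ : Ω → ℝ)
    {α : Type*} [Fintype α] [DecidableEq α] (X : Ω → α) :
    ∑ x, pr μ X x = ∑ ω, μ ω := by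
  unfold pr; rw [Finset.sum_comm]; simp

lemma pr_fst {Ω : Type*} [Fintype Ω] (μ : Ω → ℝ)
    {α β : Type*} [Fintype α] [DecidableEq α] [Fintype β] [DecidableEq β]
    (X : Ω → α) (Y : Ω → β) (x : α) :
    ∑ y, pr μ (fun ω => (X ω, Y ω)) (x, y) = pr μ X x := by
  unfold pr; rw [Finset.sum_comm]
  refine Finset.sum_congr rfl fun ω _ => ?_
  simp only [Prod.mk.injEq, ite_and]
  split <;> simp

lemma pr_snd {Ω : Type*} [Fintype Ω] (μ : Ω → ℝ)
    {α β : Type*} [Fintype α] [DecidableEq α] [Fintype β] [DecidableEq β]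
    (X : Ω → α) (Y : Ω → β) (y : β) :
    ∑ x, pr μ (fun ω => (X ω, Y ω)) (x, y) = pr μ Y y := by
  unfold pr; rw [Finset.sum_comm]
  refine Finset.sum_congr rfl fun ω _ => ?_
  simp only [Prod.mk.injEq, ite_and]
  split <;> simp

lemma gibbs {ι : Type*} [Fintype ι] (p q : ι → ℝ) (hp : ∀ i, 0 ≤ p i)
    (hq : ∀ i, 0 ≤ q i) (hpq : ∀ i, p i ≠ 0 → q i ≠ 0)
    (hsum : ∑ i, q i ≤ ∑ i, p i) :
    ∑ i, p i * Real.logb 2 (q i) ≤ ∑ i, p i * Real.logb 2 (p i) := by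
  have hlog2 : (0:ℝ) < Real.log 2 := Real.log_pos (by norm_num)
  have key : ∀ i, p i * Real.logb 2 (q i) - p i * Real.logb 2 (p i)
      ≤ (q i - p i) / Real.log 2 := by
    intro i
    rcases eq_or_lt_of_le (hp i) with h | h
    · rw [← h]
      simp only [zero_mul, sub_zero, sub_self, zero_sub]
      have : 0 ≤ (q i - 0) / Real.log 2 := by
        apply div_nonneg _ hlog2.le; simpa using hq i
      simpa using this
    · have hqi : 0 < q i := lt_of_le_of_ne (hq i) (Ne.symm (hpq i h.ne'))
      rw [← mul_sub, ← Real.logb_div hqi.ne' h.ne']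
      have hlog : Real.log (q i / p i) ≤ q i / p i - 1 :=
        Real.log_le_sub_one_of_pos (by positivity)
      have h2 : p i * Real.logb 2 (q i / p i) ≤ p i * ((q i / p i - 1) / Real.log 2) := by
        rw [Real.logb]
        gcongr
      refine h2.trans_eq ?_
      field_simp
  have hs : ∑ i, (p i * Real.logb 2 (q i) - p i * Real.logb 2 (p i))
      ≤ ∑ i, (q i - p i) / Real.log 2 := Finset.sum_le_sum fun i _ => key i
  rw [Finset.sum_sub_distrib] at hs
  have e2 : ∑ i, (q i - p i) / Real.log 2 = (∑ i, q i - ∑ i, p i) / Real.log 2 := by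
    rw [← Finset.sum_div, Finset.sum_sub_distrib]
  have h0 : (∑ i, q i - ∑ i, p i) / Real.log 2 ≤ 0 :=
    div_nonpos_of_nonpos_of_nonneg (by linarith) hlog2.le
  linarith [e2 ▸ hs]

/-- Subadditivity of entropy: `H(X,Y) ≤ H(X) + H(Y)`. -/
lemma ent_pair_le {Ω : Type*} [Fintype Ω] {μ : Ω → ℝ} (hμ : IsProb μ)
    {α β : Type*} [Fintype α] [DecidableEq α] [Fintype β] [DecidableEq β]
    (X : Ω → α) (Y : Ω → β) :
    ent μ (fun ω => (X ω, Y ω)) ≤ ent μ X + ent μ Y := by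
  set P : α × β → ℝ := pr μ (fun ω => (X ω, Y ω)) with hP
  have hPnn : ∀ z, 0 ≤ P z := fun z => pr_nonneg hμ.1 _ z
  have hXnn : ∀ x, 0 ≤ pr μ X x := fun x => pr_nonneg hμ.1 _ x
  have hYnn : ∀ y, 0 ≤ pr μ Y y := fun y => pr_nonneg hμ.1 _ y
  have hmargX : ∀ x, ∑ y, P (x, y) = pr μ X x := fun x => pr_fst μ X Y x
  have hmargY : ∀ y, ∑ x, P (x, y) = pr μ Y y := fun y => pr_snd μ X Y y
  have hPleX : ∀ x y, P (x, y) ≤ pr μ X x := by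
    intro x y
    rw [← hmargX x]
    exact Finset.single_le_sum (fun y _ => hPnn (x, y)) (Finset.mem_univ y)
  have hPleY : ∀ x y, P (x, y) ≤ pr μ Y y := by
    intro x y
    rw [← hmargY y]
    exact Finset.single_le_sum (fun x _ => hPnn (x, y)) (Finset.mem_univ x)
  have hsumP : ∑ z, P z = 1 := by rw [hP, pr_sum, hμ.2]
  have hsumq : ∑ z : α × β, pr μ X z.1 * pr μ Y z.2 = 1 := by
    rw [Fintype.sum_prod_type]
    simp_rw [← Finset.sum_mul_sum]
    rw [pr_sum, pr_sum, hμ.2, mul_one]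
  have hg := gibbs P (fun z => pr μ X z.1 * pr μ Y z.2) hPnn
    (fun z => mul_nonneg (hXnn _) (hYnn _))
    (fun z hz => by
      have h1 : 0 < pr μ X z.1 := lt_of_lt_of_le (lt_of_le_of_ne (hPnn z) (Ne.symm hz)) (hPleX z.1 z.2)
      have h2 : 0 < pr μ Y z.2 := lt_of_lt_of_le (lt_of_le_of_ne (hPnn z) (Ne.symm hz)) (hPleY z.1 z.2)
      positivity)
    (by rw [hsumq, hsumP])
  have hsplit : ∑ z : α × β, P z * Real.logb 2 (pr μ X z.1 * pr μ Y z.2)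
      = ∑ x, pr μ X x * Real.logb 2 (pr μ X x) + ∑ y, pr μ Y y * Real.logb 2 (pr μ Y y) := by
    have e1 : ∀ z : α × β, P z * Real.logb 2 (pr μ X z.1 * pr μ Y z.2)
        = P z * Real.logb 2 (pr μ X z.1) + P z * Real.logb 2 (pr μ Y z.2) := by
      intro z
      rcases eq_or_ne (P z) 0 with h | h
      · simp [h]
      · have h1 : pr μ X z.1 ≠ 0 :=
          (lt_of_lt_of_le (lt_of_le_of_ne (hPnn z) (Ne.symm h)) (hPleX z.1 z.2)).ne'
        have h2 : pr μ Y z.2 ≠ 0 :=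
          (lt_of_lt_of_le (lt_of_le_of_ne (hPnn z) (Ne.symm h)) (hPleY z.1 z.2)).ne'
        rw [Real.logb_mul h1 h2, mul_add]
    rw [Finset.sum_congr rfl (fun z _ => e1 z), Finset.sum_add_distrib]
    congr 1
    · rw [Fintype.sum_prod_type]
      refine Finset.sum_congr rfl fun x _ => ?_
      show ∑ y, P (x, y) * Real.logb 2 (pr μ X x) = _
      rw [← Finset.sum_mul, hmargX]
    · rw [Fintype.sum_prod_type_right]
      refine Finset.sum_congr rfl fun y _ => ?_
      show ∑ x, P (x, y) * Real.logb 2 (pr μ Y y) = _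
      rw [← Finset.sum_mul, hmargY]
  unfold ent
  rw [← hP]
  have := hsplit ▸ hg
  linarith [this]

/-- Entropy is invariant under composition with an injective map. -/
lemma ent_comp_inj {Ω : Type*} [Fintype Ω] (μ : Ω → ℝ)
    {α β : Type*} [Fintype α] [DecidableEq α] [Fintype β] [DecidableEq β]
    (X : Ω → α) (f : α → β) (hf : Function.Injective f) :
    ent μ (fun ω => f (X ω)) = ent μ X := by
  have hpr : ∀ x, pr μ (fun ω => f (X ω)) (f x) = pr μ X x := by
    intro x
    unfold pr
    exact Finset.sum_congr rfl fun ω _ => by simp [hf.eq_iff]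
  have h0 : ∀ y, y ∉ Finset.univ.image f → pr μ (fun ω => f (X ω)) y = 0 := by
    intro y hy
    refine Finset.sum_eq_zero fun ω _ => ?_
    rw [if_neg]
    intro h
    exact hy (Finset.mem_image.2 ⟨X ω, Finset.mem_univ _, h⟩)
  unfold ent
  congr 1
  rw [← Finset.sum_subset (Finset.subset_univ (Finset.univ.image f))
    (fun y _ hy => by rw [h0 y hy]; simp)]
  rw [Finset.sum_image (fun a _ b _ h => hf h)]
  exact Finset.sum_congr rfl fun x _ => by rw [hpr]

/-- Entropy of a boolean random variable. -/
lemma ent_bool {Ω : Type*} [Fintype Ω] {μ : Ω → ℝ} (hμ : IsProb μ)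
    (Z : Ω → Bool) : ent μ Z = H2 (pr μ Z true) := by
  have hsum : pr μ Z true + pr μ Z false = 1 := by
    have := pr_sum μ Z
    rw [Fintype.sum_bool, hμ.2] at this
    exact this
  have hfalse : pr μ Z false = 1 - pr μ Z true := by linarith
  unfold ent H2
  rw [Fintype.sum_bool, hfalse]
  ring

lemma H2_eq_binEntropy (p : ℝ) : H2 p = Real.binEntropy p / Real.log 2 := by
  unfold H2
  rw [Real.binEntropy, Real.log_inv, Real.log_inv, Real.logb, Real.logb]
  ring

lemma H2_mono {e D : ℝ} (he : 0 ≤ e) (heD : e ≤ D) (hD : D ≤ 1 / 2) :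
    H2 e ≤ H2 D := by
  rw [H2_eq_binEntropy, H2_eq_binEntropy]
  have hlog2 : (0:ℝ) < Real.log 2 := Real.log_pos (by norm_num)
  have h : Real.binEntropy e ≤ Real.binEntropy D :=
    Real.binEntropy_strictMonoOn.monotoneOn
      ⟨he, by linarith [show (2:ℝ)⁻¹ = 1/2 by norm_num]⟩
      ⟨he.trans heD, by linarith [show (2:ℝ)⁻¹ = 1/2 by norm_num]⟩ heD
  gcongr

end Aux

/-- Converse bound of Example 2. `X ~ Bern(1/2)`, `A : Ω → Fin 2`
with the value `1` representing the action "2", `α = P(A = 2) > 0`,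
`X̂₁ = g ∘ U₁`, and `α E[d_H(X,X̂₁) | A=2] ≤ D₁` with `D₁/α ≤ 1/2`. Then
`I(X;A) + α I(X;U₁|A=2) ≥ α (1 - H₂(D₁/α))`, where `I(X;U₁|A=2)` is computed
under the conditional law given `A = 2`. -/
theorem stmt7 {Ω 𝒰 : Type*} [Fintype Ω] [Fintype 𝒰] [DecidableEq 𝒰]
    (μ : Ω → ℝ) (hμ : IsProb μ)
    (X : Ω → Bool) (hX : pr μ X true = 1 / 2)
    (A : Ω → Fin 2) (U1 : Ω → 𝒰) (g : 𝒰 → Bool)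
    (D1 α : ℝ) (hα : α = pr μ A 1) (hαpos : 0 < α) (hD1 : 0 ≤ D1)
    (hdist : ∑ ω, (if A ω = 1 then μ ω else 0) *
        (if X ω = g (U1 ω) then 0 else 1) ≤ D1)
    (hhalf : D1 / α ≤ 1 / 2) :
    α * (1 - H2 (D1 / α)) ≤
      mi μ X A + α * mi (fun ω => if A ω = 1 then μ ω / α else 0) X U1 := by
  obtain ⟨hμ0, hμ1⟩ := hμ
  set ν : Ω → ℝ := fun ω => if A ω = 1 then μ ω / α else 0 with hνdef
  have hν0 : ∀ ω, 0 ≤ ν ω := by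
    intro ω
    rw [hνdef]
    dsimp only
    split
    · exact div_nonneg (hμ0 ω) hαpos.le
    · exact le_refl 0
  have hνsum : ∑ ω, ν ω = 1 := by
    have e : ∑ ω, ν ω = (∑ ω, if A ω = 1 then μ ω else 0) / α := by
      rw [Finset.sum_div]
      refine Finset.sum_congr rfl fun ω _ => ?_
      rw [hνdef]
      dsimp only
      split <;> simp
    rw [e, show (∑ ω, if A ω = 1 then μ ω else 0) = pr μ A 1 from rfl, ← hα]
    exact div_self hαpos.ne'
  have hνProb : IsProb ν := ⟨hν0, hνsum⟩
  set P : Bool → Fin 2 → ℝ := fun x a => pr μ (fun ω => (X ω, A ω)) (x, a) with hPdef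
  have hPnn : ∀ x a, 0 ≤ P x a := fun x a => pr_nonneg hμ0 _ _
  set β0 : ℝ := pr μ A 0 with hβ0def
  have hβ0 : β0 = 1 - α := by
    have h := pr_sum μ A
    rw [hμ1, Fin.sum_univ_two] at h
    rw [hβ0def, hα]
    linarith
  have hmarg1 : ∑ x, P x 1 = α := by
    rw [hPdef, hα]
    exact pr_snd μ X A 1
  have hmarg0 : ∑ x, P x 0 = β0 := by
    rw [hPdef, hβ0def]
    exact pr_snd μ X A 0
  have hprX : ∀ x, pr ν X x = P x 1 / α := by
    intro x
    rw [hPdef]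
    unfold pr
    rw [Finset.sum_div]
    refine Finset.sum_congr rfl fun ω _ => ?_
    rw [hνdef]
    dsimp only
    by_cases h1 : X ω = x <;> by_cases h2 : A ω = 1 <;>
      simp [h1, h2, Prod.mk.injEq]
  -- entropy computations
  have hentX : ent μ X = 1 := by
    have hXf : pr μ X false = 1 / 2 := by
      have h := pr_sum μ X
      rw [hμ1, Fintype.sum_bool, hX] at h
      linarith
    unfold ent
    rw [Fintype.sum_bool, hX, hXf,
      show (1:ℝ)/2 = 2⁻¹ by norm_num, Real.logb_inv,
      Real.logb_self_eq_one (by norm_num)]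
    norm_num
  have hentA : ent μ A = -(β0 * Real.logb 2 β0 + α * Real.logb 2 α) := by
    unfold ent
    rw [Fin.sum_univ_two, ← hβ0def, ← hα]
  have hentXA : ent μ (fun ω => (X ω, A ω)) =
      -((∑ x, P x 0 * Real.logb 2 (P x 0)) + ∑ x, P x 1 * Real.logb 2 (P x 1)) := by
    unfold ent
    rw [Fintype.sum_prod_type, ← Finset.sum_add_distrib]
    refine congrArg Neg.neg (Finset.sum_congr rfl fun x _ => ?_)
    rw [Fin.sum_univ_two]
  have hentνX : α * ent ν X = -(∑ x, P x 1 * Real.logb 2 (P x 1)) + α * Real.logb 2 α := by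
    have e1 : ∀ x : Bool, α * (pr ν X x * Real.logb 2 (pr ν X x))
        = P x 1 * Real.logb 2 (P x 1) - P x 1 * Real.logb 2 α := by
      intro x
      rw [hprX x]
      rcases eq_or_ne (P x 1) 0 with h | h
      · simp [h]
      · rw [Real.logb_div h hαpos.ne']
        field_simp
    have : α * ent ν X = -∑ x, α * (pr ν X x * Real.logb 2 (pr ν X x)) := by
      unfold ent
      rw [mul_neg, Finset.mul_sum]
    rw [this, Finset.sum_congr rfl fun x _ => e1 x, Finset.sum_sub_distrib,
      ← Finset.sum_mul, hmarg1]
    ring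
  -- bound on the A=0 part
  have hS : β0 * Real.logb 2 β0 - β0 ≤ ∑ x, P x 0 * Real.logb 2 (P x 0) := by
    have hPle : ∀ x, P x 0 ≤ β0 := by
      intro x
      rw [← hmarg0]
      exact Finset.single_le_sum (fun x _ => hPnn x 0) (Finset.mem_univ x)
    rcases eq_or_ne β0 0 with h0 | h0
    · have hz : ∀ x : Bool, P x 0 = 0 := fun x => le_antisymm (h0 ▸ hPle x) (hPnn x 0)
      simp [h0, hz]
    · have hβnn : 0 ≤ β0 := hβ0def ▸ pr_nonneg hμ0 A 0
      have hg := gibbs (fun x : Bool => P x 0) (fun _ => β0 / 2)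
        (fun x => hPnn x 0) (fun _ => by positivity)
        (fun x _ => by
          have : (0:ℝ) < β0 := lt_of_le_of_ne hβnn (Ne.symm h0)
          positivity)
        (by rw [hmarg0, Fintype.sum_bool]; linarith)
      rw [← Finset.sum_mul, hmarg0, Real.logb_div h0 (by norm_num),
        Real.logb_self_eq_one (by norm_num)] at hg
      linarith [hg]
  -- Fano bound
  have hFano : condEnt ν X U1 ≤ H2 (D1 / α) := by
    set E : Ω → Bool := fun ω => xor (X ω) (g (U1 ω)) with hEdef
    set f : Bool × 𝒰 → Bool × 𝒰 := fun z => (xor z.1 (g z.2), z.2) with hfdef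
    have hfinv : ∀ z, f (f z) = z := by
      rintro ⟨a, b⟩
      simp [hfdef, Bool.xor_assoc]
    have hfinj : Function.Injective f := Function.LeftInverse.injective hfinv
    have h1 : ent ν (fun ω => (E ω, U1 ω)) = ent ν (fun ω => (X ω, U1 ω)) :=
      ent_comp_inj ν (fun ω => (X ω, U1 ω)) f hfinj
    have h2 : ent ν (fun ω => (E ω, U1 ω)) ≤ ent ν E + ent ν U1 :=
      ent_pair_le hνProb E U1
    have h3 : ent ν E = H2 (pr ν E true) := ent_bool hνProb E
    have he0 : 0 ≤ pr ν E true := pr_nonneg hν0 E true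
    have heD : pr ν E true ≤ D1 / α := by
      have hkey : α * pr ν E true
          = ∑ ω, (if A ω = 1 then μ ω else 0) * (if X ω = g (U1 ω) then 0 else 1) := by
        unfold pr
        rw [Finset.mul_sum]
        refine Finset.sum_congr rfl fun ω _ => ?_
        rw [hEdef, hνdef]
        dsimp only
        by_cases h2 : A ω = 1 <;> rcases Bool.eq_false_or_eq_true (X ω) with hx | hx <;>
          rcases Bool.eq_false_or_eq_true (g (U1 ω)) with hg | hg <;>
          simp [h2, hx, hg] <;> field_simp
      rw [le_div_iff₀ hαpos, mul_comm, hkey]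
      exact hdist
    have hH2 : H2 (pr ν E true) ≤ H2 (D1 / α) := H2_mono he0 heD hhalf
    calc condEnt ν X U1 = ent ν (fun ω => (E ω, U1 ω)) - ent ν U1 := by
          unfold condEnt
          rw [h1]
      _ ≤ ent ν E := by linarith
      _ = H2 (pr ν E true) := h3
      _ ≤ H2 (D1 / α) := hH2
  -- assemble
  have expand : mi μ X A + α * mi ν X U1
      = ent μ X - (ent μ (fun ω => (X ω, A ω)) - ent μ A)
        + (α * ent ν X - α * condEnt ν X U1) := by
    unfold mi
    have : condEnt μ X A = ent μ (fun ω => (X ω, A ω)) - ent μ A := rfl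
    rw [this]
    ring
  have hαH : α * condEnt ν X U1 ≤ α * H2 (D1 / α) :=
    mul_le_mul_of_nonneg_left hFano hαpos.le
  rw [expand, hentX, hentA, hentXA, hentνX]
  have hβ0' : β0 = 1 - α := hβ0
  nlinarith [hS, hαH]
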